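/- arXiv:2403.03197 — 9 statements merged into one kernel-verified Lean document; each statement's English description precedes it below -/
import Mathlib

section
/- For every integer n ≥ 1, the set 𝒞_n of all instances of the θ_n-chip is equal to the extended set of metallic mean Wang tiles 𝒯'_n. -/
open scoped BigOperators

namespace MetallicMean

/-- A 3-dimensional integer vector. -/
abbrev Vec3 := ℤ × ℤ × ℤ

/-- A Wang tile is a quadruple (right, top, left, bottom) of labels. -/
abbrev Tile := Vec3 × Vec3 × Vec3 × Vec3

def right (τ : Tile) : Vec3 := τ.1
def top (τ : Tile) : Vec3 := τ.2.1
def left (τ : Tile) : Vec3 := τ.2.2.1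
def bottom (τ : Tile) : Vec3 := τ.2.2.2

/-- Reflection of a tile by the positive diagonal: (r,t,ℓ,b) ↦ (t,r,b,ℓ). -/
def reflect (τ : Tile) : Tile := (top τ, right τ, bottom τ, left τ)

/-- The set V_n of admissible labels. -/
def Vset (n : ℤ) : Set Vec3 :=
  {v | 0 ≤ v.1 ∧ v.1 ≤ v.2.1 ∧ v.2.1 ≤ v.2.2 ∧ v.2.2 ≤ n + 1 ∧ v.2.1 ≤ 1}

/-- The function θ_n. -/
def theta (n : ℤ) (u v : Vec3) : Vec3 :=
  (u.1,
   if u.1 = 0 then v.2.2 - n else 1,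
   if v.1 = 0 then v.2.1 + u.1 else u.2.2 + 1)

/-- The set 𝒞_n of instances of the θ_n-chip. -/
def Cset (n : ℤ) : Set Tile :=
  {τ | ∃ u v : Vec3, u ∈ Vset n ∧ v ∈ Vset n ∧
      theta n u v ∈ Vset n ∧ theta n v u ∈ Vset n ∧
      τ = (theta n u v, theta n v u, u, v)}

/-- The n-th metallic mean β, the positive root of x² - nx - 1. -/
noncomputable def beta (n : ℤ) : ℝ := ((n : ℝ) + Real.sqrt ((n : ℝ) ^ 2 + 4)) / 2

/-- The conjugate root β* = n - β = -β⁻¹. -/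
noncomputable def betaStar (n : ℤ) : ℝ := (n : ℝ) - beta n

/-- The coding map Λ_n. -/
noncomputable def Lam (n : ℤ) (x y : ℝ) : Vec3 :=
  (⌊y + betaStar n + 1⌋,
   ⌊(beta n)⁻¹ * x + y + betaStar n + 1⌋,
   ⌊beta n * x + y + betaStar n + 1⌋)

/-- The Wang tile TILE_n(x, y), written as (right, top, left, bottom). -/
noncomputable def TileAt (n : ℤ) (x y : ℝ) : Tile :=
  (Lam n (Int.fract x) (Int.fract y),
   Lam n (Int.fract y) (Int.fract x),
   Lam n (Int.fract (x + betaStar n)) (Int.fract y),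
   Lam n (Int.fract (y + betaStar n)) (Int.fract x))

/-- The metallic mean Wang tile set 𝒯_n = {TILE_n(x,y) : (x,y) ∈ [0,1]²}. -/
def Tset (n : ℤ) : Set Tile :=
  {τ | ∃ x y : ℝ, x ∈ Set.Icc (0 : ℝ) 1 ∧ y ∈ Set.Icc (0 : ℝ) 1 ∧ τ = TileAt n x y}

/-- A configuration assigns a tile to every position of ℤ². -/
abbrev Config := ℤ × ℤ → Tile

/-- A configuration is valid w.r.t. a set `S` of Wang tiles if all its tiles are in `S`
and contiguous edges of adjacent tiles match. -/
def IsValid (S : Set Tile) (w : Config) : Prop :=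
  (∀ p : ℤ × ℤ, w p ∈ S) ∧
  ∀ p : ℤ × ℤ,
    right (w p) = left (w (p + (1, 0))) ∧
    top (w p) = bottom (w (p + (0, 1)))

/-- The Wang shift Ω_S of all valid configurations over `S`. -/
def OmegaOf (S : Set Tile) : Set Config := {w | IsValid S w}

/-- The shift ℤ²-action on configurations: (σ^k w)(p) = w(p + k). -/
def shift (k : ℤ × ℤ) (w : Config) : Config := fun p => w (p + k)

end MetallicMean

namespace MetallicMean

/-- White tiles. -/
def whiteT (n : ℤ) : Set Tile :=
  {τ | ∃ i j : ℤ, 1 ≤ i ∧ i ≤ n ∧ 1 ≤ j ∧ j ≤ n ∧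
    τ = ((1, 1, i + 1), (1, 1, j + 1), (1, 1, i), (1, 1, j))}

/-- Horizontal blue tiles (extended set: 0 ≤ i ≤ n). -/
def blueHExt (n : ℤ) : Set Tile :=
  {τ | ∃ i : ℤ, 0 ≤ i ∧ i ≤ n ∧
    τ = ((0, 0, i + 1), (1, 1, 1), (0, 0, i), (1, 1, n))}

/-- Horizontal yellow tiles. -/
def yellowH (n : ℤ) : Set Tile :=
  {τ | ∃ i : ℤ, 1 ≤ i ∧ i ≤ n ∧
    τ = ((0, 1, i + 1), (1, 1, 2), (0, 1, i), (1, 1, n + 1))}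

/-- Horizontal green tiles. -/
def greenH (n : ℤ) : Set Tile :=
  {τ | ∃ i : ℤ, 0 ≤ i ∧ i ≤ n ∧
    τ = ((0, 1, i + 1), (1, 1, 1), (0, 0, i), (1, 1, n + 1))}

/-- Horizontal antigreen tiles. -/
def antigreenH (n : ℤ) : Set Tile :=
  {τ | ∃ i : ℤ, 1 ≤ i ∧ i ≤ n ∧
    τ = ((0, 0, i + 1), (1, 1, 2), (0, 1, i), (1, 1, n))}

/-- The three vectors indexing junction tiles. -/
def junctionVecs (n : ℤ) : Set Vec3 := {(0, 0, n), (0, 1, n), (0, 1, n + 1)}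

/-- The 9 junction tiles of the extended set. -/
def junctionExt (n : ℤ) : Set Tile :=
  {τ | ∃ u v : Vec3, u ∈ junctionVecs n ∧ v ∈ junctionVecs n ∧
    τ = ((0, v.2.2 - n, v.2.1), (0, u.2.2 - n, u.2.1), u, v)}

/-- The extended set 𝒯'_n of metallic mean Wang tiles. -/
def TprimeSet (n : ℤ) : Set Tile :=
  whiteT n ∪ blueHExt n ∪ yellowH n ∪ greenH n ∪ antigreenH n ∪
    reflect '' blueHExt n ∪ reflect '' yellowH n ∪ reflect '' greenH n ∪
    reflect '' antigreenH n ∪ junctionExt n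

/-- For every integer n ≥ 1, the set 𝒞_n of all instances of the θ_n-chip
equals the extended set of metallic mean Wang tiles 𝒯'_n. -/
theorem statement1 (n : ℤ) (hn : 1 ≤ n) : Cset n = TprimeSet n := by
  ext τ
  simp only [Cset, TprimeSet, Set.mem_setOf_eq, Set.mem_union]
  constructor
  · rintro ⟨⟨u0, u1, u2⟩, ⟨v0, v1, v2⟩, hu, hv, h1, h2, rfl⟩
    simp only [Vset, Set.mem_setOf_eq, theta] at hu hv h1 h2
    obtain ⟨hua, hub, huc, hud, hue⟩ := hu
    obtain ⟨hva, hvb, hvc, hvd, hve⟩ := hv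
    have hu0 : u0 = 0 ∨ u0 = 1 := by omega
    have hv0 : v0 = 0 ∨ v0 = 1 := by omega
    rcases hu0 with rfl | rfl <;> rcases hv0 with rfl | rfl <;>
      norm_num at h1 h2
    · -- junction
      right
      refine ⟨(0, u1, u2), (0, v1, v2), ?_, ?_, ?_⟩
      · simp only [junctionVecs, Set.mem_insert_iff, Set.mem_singleton_iff, Prod.mk.injEq, true_and]
        omega
      · simp only [junctionVecs, Set.mem_insert_iff, Set.mem_singleton_iff, Prod.mk.injEq, true_and]
        omega
      · norm_num [theta, Prod.mk.injEq]
    · -- u0 = 0, v0 = 1 : horizontal tiles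
      obtain rfl : v1 = 1 := by omega
      have h4 : (u1 = 0 ∧ n = v2) ∨ (u1 = 0 ∧ n + 1 = v2) ∨ (u1 = 1 ∧ n = v2) ∨
          (u1 = 1 ∧ n + 1 = v2) := by omega
      rcases h4 with ⟨rfl, rfl⟩ | ⟨rfl, rfl⟩ | ⟨rfl, rfl⟩ | ⟨rfl, rfl⟩
      · -- blue
        iterate 8 left
        right
        exact ⟨u2, by omega, by omega, by norm_num [theta, Prod.mk.injEq]⟩
      · -- green
        iterate 6 left
        right
        exact ⟨u2, by omega, by omega, by norm_num [theta, Prod.mk.injEq]⟩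
      · -- antigreen
        iterate 5 left
        right
        exact ⟨u2, by omega, by omega, by norm_num [theta, Prod.mk.injEq]⟩
      · -- yellow
        iterate 7 left
        right
        exact ⟨u2, by omega, by omega, by norm_num [theta, Prod.mk.injEq]⟩
    · -- u0 = 1, v0 = 0 : reflected horizontal tiles
      obtain rfl : u1 = 1 := by omega
      have h4 : (v1 = 0 ∧ n = u2) ∨ (v1 = 0 ∧ n + 1 = u2) ∨ (v1 = 1 ∧ n = u2) ∨
          (v1 = 1 ∧ n + 1 = u2) := by omega
      rcases h4 with ⟨rfl, rfl⟩ | ⟨rfl, rfl⟩ | ⟨rfl, rfl⟩ | ⟨rfl, rfl⟩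
      · -- reflect blue
        iterate 4 left
        right
        refine ⟨((0, 0, v2 + 1), (1, 1, 1), (0, 0, v2), (1, 1, n)),
          ⟨v2, by omega, by omega, rfl⟩, ?_⟩
        norm_num [reflect, top, right, left, bottom, theta, Prod.mk.injEq]
      · -- reflect green
        iterate 2 left
        right
        refine ⟨((0, 1, v2 + 1), (1, 1, 1), (0, 0, v2), (1, 1, n + 1)),
          ⟨v2, by omega, by omega, rfl⟩, ?_⟩
        norm_num [reflect, top, right, left, bottom, theta, Prod.mk.injEq]
      · -- reflect antigreen
        left
        right
        refine ⟨((0, 0, v2 + 1), (1, 1, 2), (0, 1, v2), (1, 1, n)),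
          ⟨v2, by omega, by omega, rfl⟩, ?_⟩
        norm_num [reflect, top, right, left, bottom, theta, Prod.mk.injEq]
      · -- reflect yellow
        iterate 3 left
        right
        refine ⟨((0, 1, v2 + 1), (1, 1, 2), (0, 1, v2), (1, 1, n + 1)),
          ⟨v2, by omega, by omega, rfl⟩, ?_⟩
        norm_num [reflect, top, right, left, bottom, theta, Prod.mk.injEq]
    · -- white
      iterate 9 left
      obtain rfl : u1 = 1 := by omega
      obtain rfl : v1 = 1 := by omega
      exact ⟨u2, v2, by omega, by omega, by omega, by omega,
        by norm_num [theta, Prod.mk.injEq]⟩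
  · rintro (((((((((h | h) | h) | h) | h) | h) | h) | h) | h) | h)
    · obtain ⟨i, j, hi0, hi1, hj0, hj1, rfl⟩ := h
      refine ⟨(1, 1, i), (1, 1, j), ?_, ?_, ?_, ?_, ?_⟩ <;>
        norm_num [Vset, theta, Prod.mk.injEq] <;> omega
    · obtain ⟨i, hi0, hi1, rfl⟩ := h
      refine ⟨(0, 0, i), (1, 1, n), ?_, ?_, ?_, ?_, ?_⟩ <;>
        norm_num [Vset, theta, Prod.mk.injEq] <;> omega
    · obtain ⟨i, hi0, hi1, rfl⟩ := h
      refine ⟨(0, 1, i), (1, 1, n + 1), ?_, ?_, ?_, ?_, ?_⟩ <;>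
        norm_num [Vset, theta, Prod.mk.injEq] <;> omega
    · obtain ⟨i, hi0, hi1, rfl⟩ := h
      refine ⟨(0, 0, i), (1, 1, n + 1), ?_, ?_, ?_, ?_, ?_⟩ <;>
        norm_num [Vset, theta, Prod.mk.injEq] <;> omega
    · obtain ⟨i, hi0, hi1, rfl⟩ := h
      refine ⟨(0, 1, i), (1, 1, n), ?_, ?_, ?_, ?_, ?_⟩ <;>
        norm_num [Vset, theta, Prod.mk.injEq] <;> omega
    · obtain ⟨x, hx, rfl⟩ := h
      obtain ⟨i, hi0, hi1, rfl⟩ := hx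
      refine ⟨(1, 1, n), (0, 0, i), ?_, ?_, ?_, ?_, ?_⟩ <;>
        norm_num [Vset, theta, reflect, top, right, left, bottom, Prod.mk.injEq] <;> omega
    · obtain ⟨x, hx, rfl⟩ := h
      obtain ⟨i, hi0, hi1, rfl⟩ := hx
      refine ⟨(1, 1, n + 1), (0, 1, i), ?_, ?_, ?_, ?_, ?_⟩ <;>
        norm_num [Vset, theta, reflect, top, right, left, bottom, Prod.mk.injEq] <;> omega
    · obtain ⟨x, hx, rfl⟩ := h
      obtain ⟨i, hi0, hi1, rfl⟩ := hx
      refine ⟨(1, 1, n + 1), (0, 0, i), ?_, ?_, ?_, ?_, ?_⟩ <;>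
        norm_num [Vset, theta, reflect, top, right, left, bottom, Prod.mk.injEq] <;> omega
    · obtain ⟨x, hx, rfl⟩ := h
      obtain ⟨i, hi0, hi1, rfl⟩ := hx
      refine ⟨(1, 1, n), (0, 1, i), ?_, ?_, ?_, ?_, ?_⟩ <;>
        norm_num [Vset, theta, reflect, top, right, left, bottom, Prod.mk.injEq] <;> omega
    · obtain ⟨u, v, hu, hv, rfl⟩ := h
      simp only [junctionVecs, Set.mem_insert_iff, Set.mem_singleton_iff] at hu hv
      refine ⟨u, v, ?_, ?_, ?_, ?_, ?_⟩ <;>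
        rcases hu with rfl | rfl | rfl <;> rcases hv with rfl | rfl | rfl <;>
          norm_num [Vset, theta, Prod.mk.injEq] <;> omega

end MetallicMean
end

section
/- For every integer n ≥ 1, the tile set 𝒞_n admits the north-east characterization 𝒞_n = {(r, t, ψ_n(r,t), ψ_n(t,r)) : r,t ∈ V_n such that ψ_n(r,t) ∈ V_n and ψ_n(t,r) ∈ V_n}, where tiles are written as (right, top, left, bottom). -/
open scoped BigOperators

namespace MetallicMean

/-- The function ψ_n computing the (left, bottom) labels from the (right, top) labels. -/
def psi (n : ℤ) (r t : Vec3) : Vec3 :=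
  (r.1,
   if r.1 = 0 then t.2.2 - t.1 else 1,
   if t.1 = 0 then t.2.1 + n else r.2.2 - 1)

lemma psi_theta (n : ℤ) {u v : Vec3} (hu : u ∈ Vset n) (hv : v ∈ Vset n) :
    psi n (theta n u v) (theta n v u) = u := by
  obtain ⟨u0, u1, u2⟩ := u
  obtain ⟨v0, v1, v2⟩ := v
  obtain ⟨hu1, hu2, hu3, hu4, hu5⟩ := hu
  obtain ⟨hv1, hv2, hv3, hv4, hv5⟩ := hv
  simp only [psi, theta, Prod.mk.injEq] at *
  split_ifs <;> exact ⟨trivial, by omega, by omega⟩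

lemma theta_psi (n : ℤ) {r t : Vec3} (hr : r ∈ Vset n) (ht : t ∈ Vset n) :
    theta n (psi n r t) (psi n t r) = r := by
  obtain ⟨r0, r1, r2⟩ := r
  obtain ⟨t0, t1, t2⟩ := t
  obtain ⟨hr1, hr2, hr3, hr4, hr5⟩ := hr
  obtain ⟨ht1, ht2, ht3, ht4, ht5⟩ := ht
  simp only [psi, theta, Prod.mk.injEq] at *
  split_ifs <;> exact ⟨trivial, by omega, by omega⟩

/-- For every integer n ≥ 1, the tile set 𝒞_n admits the north-east
characterization via ψ_n, writing tiles as (right, top, left, bottom). -/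
theorem statement2 (n : ℤ) (hn : 1 ≤ n) :
    Cset n = {τ : Tile | ∃ r t : Vec3, r ∈ Vset n ∧ t ∈ Vset n ∧
      psi n r t ∈ Vset n ∧ psi n t r ∈ Vset n ∧
      τ = (r, t, psi n r t, psi n t r)} := by
  ext τ
  simp only [Cset, Set.mem_setOf_eq]
  constructor
  · rintro ⟨u, v, hu, hv, hr, ht, rfl⟩
    exact ⟨theta n u v, theta n v u, hr, ht,
      by rw [psi_theta n hu hv]; exact hu,
      by rw [psi_theta n hv hu]; exact hv,
      by rw [psi_theta n hu hv, psi_theta n hv hu]⟩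
  · rintro ⟨r, t, hr, ht, hpr, hpt, rfl⟩
    exact ⟨psi n r t, psi n t r, hpr, hpt,
      by rw [theta_psi n hr ht]; exact hr,
      by rw [theta_psi n ht hr]; exact ht,
      by rw [theta_psi n hr ht, theta_psi n ht hr]⟩

end MetallicMean
end

section
/- For every integer n ≥ 1, the set of Wang tiles 𝒞_n is both SW-deterministic and NE-deterministic: if two tiles of 𝒞_n have the same left label and the same bottom label then they are equal, and if two tiles of 𝒞_n have the same right label and the same top label then they are equal. -/
open scoped BigOperators

namespace MetallicMean

/-- For every integer n ≥ 1, the set of Wang tiles 𝒞_n is both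
SW-deterministic and NE-deterministic. -/
theorem statement3 (n : ℤ) (hn : 1 ≤ n) :
    (∀ τ₁ ∈ Cset n, ∀ τ₂ ∈ Cset n,
      left τ₁ = left τ₂ → bottom τ₁ = bottom τ₂ → τ₁ = τ₂) ∧
    (∀ τ₁ ∈ Cset n, ∀ τ₂ ∈ Cset n,
      right τ₁ = right τ₂ → top τ₁ = top τ₂ → τ₁ = τ₂) := by
  constructor
  · rintro τ₁ ⟨u₁, v₁, _, _, _, _, rfl⟩ τ₂ ⟨u₂, v₂, _, _, _, _, rfl⟩ hl hb
    simp only [left, bottom] at hl hb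
    rw [hl, hb]
  · rintro τ₁ ⟨⟨a₁, b₁, c₁⟩, ⟨d₁, e₁, f₁⟩, hu₁, hv₁, _, _, rfl⟩
      τ₂ ⟨⟨a₂, b₂, c₂⟩, ⟨d₂, e₂, f₂⟩, hu₂, hv₂, _, _, rfl⟩ hr ht
    simp only [right, top, theta, Prod.mk.injEq] at hr ht
    simp only [Vset, Set.mem_setOf_eq] at hu₁ hv₁ hu₂ hv₂
    suffices h : a₁ = a₂ ∧ b₁ = b₂ ∧ c₁ = c₂ ∧ d₁ = d₂ ∧ e₁ = e₂ ∧ f₁ = f₂ by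
      obtain ⟨rfl, rfl, rfl, rfl, rfl, rfl⟩ := h
      rfl
    split_ifs at hr ht <;> omega

end MetallicMean
end

section
/- Let n ≥ 1 be an integer, d = (0,−1,1) and e = (1,0,0). Every Wang tile (r,t,ℓ,b) ∈ 𝒞_n satisfies the system of equations ⟨(1/n)d, t + ℓ⟩ − ⟨e, ℓ⟩ = ⟨(1/n)d, b + r⟩ − ⟨e, b⟩, ⟨e, ℓ⟩ = ⟨e, r⟩, and ⟨e, b⟩ = ⟨e, t⟩; equivalently, writing ℓ = (ℓ₀,ℓ₁,ℓ₂), b = (b₀,b₁,b₂), r = (r₀,r₁,r₂), t = (t₀,t₁,t₂): ℓ₀ = r₀, b₀ = t₀, and t₂ − t₁ + ℓ₂ − ℓ₁ − n·ℓ₀ = b₂ − b₁ + r₂ − r₁ − n·b₀. -/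
open scoped BigOperators

namespace MetallicMean

/-- Rational 3-dimensional vectors. -/
abbrev Vec3Q := ℚ × ℚ × ℚ

/-- Cast an integer vector to a rational vector. -/
def toQ (v : Vec3) : Vec3Q := ((v.1 : ℚ), (v.2.1 : ℚ), (v.2.2 : ℚ))

/-- The canonical inner product on ℚ³. -/
def dotQ (a b : Vec3Q) : ℚ := a.1 * b.1 + a.2.1 * b.2.1 + a.2.2 * b.2.2

/-- The vector d = (0, -1, 1). -/
def dQ : Vec3Q := (0, -1, 1)

/-- The vector e = (1, 0, 0). -/
def eQ : Vec3Q := (1, 0, 0)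

end MetallicMean

namespace MetallicMean

/-- Every Wang tile (r,t,ℓ,b) ∈ 𝒞_n satisfies
⟨(1/n)d, t+ℓ⟩ - ⟨e,ℓ⟩ = ⟨(1/n)d, b+r⟩ - ⟨e,b⟩, ⟨e,ℓ⟩ = ⟨e,r⟩ and ⟨e,b⟩ = ⟨e,t⟩;
equivalently ℓ₀ = r₀, b₀ = t₀ and
t₂ - t₁ + ℓ₂ - ℓ₁ - n·ℓ₀ = b₂ - b₁ + r₂ - r₁ - n·b₀. -/
theorem statement4 (n : ℤ) (hn : 1 ≤ n) (τ : Tile) (hτ : τ ∈ Cset n) :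
    (dotQ ((1 / (n : ℚ)) • dQ) (toQ (top τ) + toQ (left τ)) - dotQ eQ (toQ (left τ)) =
      dotQ ((1 / (n : ℚ)) • dQ) (toQ (bottom τ) + toQ (right τ)) - dotQ eQ (toQ (bottom τ))) ∧
    dotQ eQ (toQ (left τ)) = dotQ eQ (toQ (right τ)) ∧
    dotQ eQ (toQ (bottom τ)) = dotQ eQ (toQ (top τ)) ∧
    (left τ).1 = (right τ).1 ∧
    (bottom τ).1 = (top τ).1 ∧
    (top τ).2.2 - (top τ).2.1 + (left τ).2.2 - (left τ).2.1 - n * (left τ).1 =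
      (bottom τ).2.2 - (bottom τ).2.1 + (right τ).2.2 - (right τ).2.1 - n * (bottom τ).1 := by
  obtain ⟨u, v, hu, hv, _, _, rfl⟩ := hτ
  obtain ⟨hu0, hu1, hu2, hu3, hu4⟩ := hu
  obtain ⟨hv0, hv1, hv2, hv3, hv4⟩ := hv
  have hu01 : u.1 = 0 ∨ u.1 = 1 := by omega
  have hv01 : v.1 = 0 ∨ v.1 = 1 := by omega
  have hn0 : (n : ℚ) ≠ 0 := by exact_mod_cast (by omega : n ≠ 0)
  have key : (theta n v u).2.2 - (theta n v u).2.1 + u.2.2 - u.2.1 - n * u.1 =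
      v.2.2 - v.2.1 + (theta n u v).2.2 - (theta n u v).2.1 - n * v.1 := by
    rcases hu01 with h1 | h1 <;> rcases hv01 with h2 | h2 <;>
      simp [theta, h1, h2] <;> omega
  refine ⟨?_, ?_, ?_, rfl, rfl, key⟩
  · simp only [right, top, left, bottom, dotQ, toQ, dQ, eQ, Prod.fst, Prod.snd,
      Prod.smul_mk, Prod.add_def, smul_eq_mul]
    field_simp
    have keyQ : ((((theta n v u).2.2 - (theta n v u).2.1 + u.2.2 - u.2.1 - n * u.1 : ℤ)) : ℚ) =
        ((v.2.2 - v.2.1 + (theta n u v).2.2 - (theta n u v).2.1 - n * v.1 : ℤ) : ℚ) := by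
      exact congrArg (fun z : ℤ => (z : ℚ)) key
    push_cast at keyQ
    linarith
  · simp [right, left, dotQ, toQ, eQ, theta]
  · simp [bottom, top, dotQ, toQ, eQ, theta]

end MetallicMean
end

section
/- Let n, h, k ≥ 1 be integers, d = (0,−1,1) and e = (1,0,0). Let {(r^(i,j), t^(i,j), ℓ^(i,j), b^(i,j))}_{1≤i≤h, 1≤j≤k} be a family of tiles in 𝒞_n forming a valid tiling of an h × k rectangle, i.e., r^(i,j) = ℓ^(i+1,j) for all 1 ≤ i ≤ h−1, 1 ≤ j ≤ k, and t^(i,j) = b^(i,j+1) for all 1 ≤ i ≤ h, 1 ≤ j ≤ k−1. Set R = (1/k)·Σ_{j=1}^{k} r^(h,j), T = (1/h)·Σ_{i=1}^{h} t^(i,k), L = (1/k)·Σ_{j=1}^{k} ℓ^(1,j), B = (1/h)·Σ_{i=1}^{h} b^(i,1) in ℚ³. Then (1/k)·⟨(1/n)d, T − B⟩ − ⟨e, L⟩ = (1/h)·⟨(1/n)d, R − L⟩ − ⟨e, B⟩. -/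
open scoped BigOperators

namespace MetallicMean

lemma dotQ_add' (a x y : Vec3Q) : dotQ a (x + y) = dotQ a x + dotQ a y := by
  simp [dotQ, Prod.fst_add, Prod.snd_add]; ring

lemma dotQ_sub' (a x y : Vec3Q) : dotQ a (x - y) = dotQ a x - dotQ a y := by
  simp [dotQ, Prod.fst_sub, Prod.snd_sub]; ring

lemma dotQ_smul' (c : ℚ) (a x : Vec3Q) : dotQ a (c • x) = c * dotQ a x := by
  simp [dotQ, Prod.smul_fst, Prod.smul_snd, smul_eq_mul]; ring

lemma dotQ_sum' {ι : Type*} (a : Vec3Q) (s : Finset ι) (f : ι → Vec3Q) :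
    dotQ a (∑ i ∈ s, f i) = ∑ i ∈ s, dotQ a (f i) := by
  classical
  induction s using Finset.induction with
  | empty => simp [dotQ]
  | insert _ _ hx ih => simp [Finset.sum_insert hx, dotQ_add', ih]

lemma constAux (f : ℤ → ℚ) (h : ℤ)
    (step : ∀ i, 1 ≤ i → i ≤ h - 1 → f (i + 1) = f i) :
    ∀ i, 1 ≤ i → i ≤ h → f i = f 1 := by
  refine Int.le_induction ?_ ?_
  · intro _; rfl
  · intro i hi ih hih
    rw [step i hi (by omega), ih (by omega)]

lemma telAux (F G : ℤ → ℚ) : ∀ k : ℤ, 1 ≤ k →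
    (∀ j, 1 ≤ j → j ≤ k - 1 → F j = G (j + 1)) →
    ∑ j ∈ Finset.Icc 1 k, (F j - G j) = F k - G 1 := by
  refine Int.le_induction ?_ ?_
  · intro _; simp
  · intro k hk ih step
    have hins : Finset.Icc (1 : ℤ) (k + 1) = insert (k + 1) (Finset.Icc 1 k) := by
      ext x; simp [Finset.mem_Icc]; omega
    rw [hins, Finset.sum_insert (by simp [Finset.mem_Icc]),
      ih (fun j hj1 hj2 => step j hj1 (by omega)), step k hk (by omega)]
    ring

lemma castIccCard (h : ℤ) (hh : 1 ≤ h) :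
    (((Finset.Icc (1 : ℤ) h).card : ℚ)) = (h : ℚ) := by
  rw [Int.card_Icc]
  have h1 : h + 1 - 1 = h := by ring
  rw [h1]
  have h2 : ((h.toNat : ℤ) : ℚ) = ((h : ℤ) : ℚ) := by rw [Int.toNat_of_nonneg (by omega)]
  exact_mod_cast h2

lemma tile_eq (n : ℤ) (hn : 1 ≤ n) {τ : Tile} (hτ : τ ∈ Cset n) :
    dotQ ((1 / (n : ℚ)) • dQ) (toQ (top τ)) - dotQ ((1 / (n : ℚ)) • dQ) (toQ (bottom τ)) -
      dotQ eQ (toQ (left τ)) =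
    dotQ ((1 / (n : ℚ)) • dQ) (toQ (right τ)) - dotQ ((1 / (n : ℚ)) • dQ) (toQ (left τ)) -
      dotQ eQ (toQ (bottom τ)) := by
  obtain ⟨u, v, hu, hv, -, -, rfl⟩ := hτ
  obtain ⟨hu0, hu1, hu2, hu3, hu4⟩ := hu
  obtain ⟨hv0, hv1, hv2, hv3, hv4⟩ := hv
  have hn0 : (n : ℚ) ≠ 0 := by
    have : n ≠ 0 := by omega
    exact_mod_cast this
  have hu01 : u.1 = 0 ∨ (u.1 = 1 ∧ u.2.1 = 1) := by omega
  have hv01 : v.1 = 0 ∨ (v.1 = 1 ∧ v.2.1 = 1) := by omega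
  simp only [right, top, left, bottom, theta, toQ, dotQ, dQ, eQ, Prod.smul_mk,
    smul_eq_mul]
  rcases hu01 with hu' | ⟨hu', hu''⟩ <;> rcases hv01 with hv' | ⟨hv', hv''⟩
  · simp [hu', hv'] <;> (push_cast; field_simp) <;> ring
  · simp [hu', hv', hv''] <;> (push_cast; field_simp) <;> ring
  · simp [hu', hv', hu''] <;> (push_cast; field_simp) <;> ring
  · simp [hu', hv', hu'', hv''] <;> (push_cast; field_simp) <;> ring

lemma right_fst (n : ℤ) {τ : Tile} (hτ : τ ∈ Cset n) : (right τ).1 = (left τ).1 := by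
  obtain ⟨u, v, -, -, -, -, rfl⟩ := hτ
  simp [right, left, theta]

lemma top_fst (n : ℤ) {τ : Tile} (hτ : τ ∈ Cset n) : (top τ).1 = (bottom τ).1 := by
  obtain ⟨u, v, -, -, -, -, rfl⟩ := hτ
  simp [top, bottom, theta]

lemma dotQ_eQ (w : Vec3) : dotQ eQ (toQ w) = (w.1 : ℚ) := by
  simp [dotQ, eQ, toQ]

/-- Equation satisfied by a valid h × k rectangular tiling by tiles of 𝒞_n:
(1/k)·⟨(1/n)d, T - B⟩ - ⟨e, L⟩ = (1/h)·⟨(1/n)d, R - L⟩ - ⟨e, B⟩, where R, T, L, B are the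
averages of the right, top, left and bottom labels on the boundary of the rectangle. -/
theorem statement5 (n h k : ℤ) (hn : 1 ≤ n) (hh : 1 ≤ h) (hk : 1 ≤ k)
    (tile : ℤ → ℤ → Tile)
    (htile : ∀ i j : ℤ, 1 ≤ i → i ≤ h → 1 ≤ j → j ≤ k → tile i j ∈ Cset n)
    (hhoriz : ∀ i j : ℤ, 1 ≤ i → i ≤ h - 1 → 1 ≤ j → j ≤ k →
      right (tile i j) = left (tile (i + 1) j))
    (hvert : ∀ i j : ℤ, 1 ≤ i → i ≤ h → 1 ≤ j → j ≤ k - 1 →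
      top (tile i j) = bottom (tile i (j + 1))) :
    (1 / (k : ℚ)) * dotQ ((1 / (n : ℚ)) • dQ)
        (((1 / (h : ℚ)) • ∑ i ∈ Finset.Icc 1 h, toQ (top (tile i k))) -
          ((1 / (h : ℚ)) • ∑ i ∈ Finset.Icc 1 h, toQ (bottom (tile i 1)))) -
      dotQ eQ ((1 / (k : ℚ)) • ∑ j ∈ Finset.Icc 1 k, toQ (left (tile 1 j))) =
    (1 / (h : ℚ)) * dotQ ((1 / (n : ℚ)) • dQ)
        (((1 / (k : ℚ)) • ∑ j ∈ Finset.Icc 1 k, toQ (right (tile h j))) -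
          ((1 / (k : ℚ)) • ∑ j ∈ Finset.Icc 1 k, toQ (left (tile 1 j)))) -
      dotQ eQ ((1 / (h : ℚ)) • ∑ i ∈ Finset.Icc 1 h, toQ (bottom (tile i 1))) := by
  set dn : Vec3Q := (1 / (n : ℚ)) • dQ with hdn
  have hhq : (h : ℚ) ≠ 0 := by exact_mod_cast (by omega : h ≠ 0)
  have hkq : (k : ℚ) ≠ 0 := by exact_mod_cast (by omega : k ≠ 0)
  -- telescoping in j for each row i
  have H1 : ∀ i, 1 ≤ i → i ≤ h →
      ∑ j ∈ Finset.Icc 1 k, (dotQ dn (toQ (top (tile i j))) - dotQ dn (toQ (bottom (tile i j))))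
        = dotQ dn (toQ (top (tile i k))) - dotQ dn (toQ (bottom (tile i 1))) := by
    intro i hi1 hi2
    exact telAux _ _ k hk (fun j hj1 hj2 => by rw [hvert i j hi1 hi2 hj1 hj2])
  -- telescoping in i for each column j
  have H2 : ∀ j, 1 ≤ j → j ≤ k →
      ∑ i ∈ Finset.Icc 1 h, (dotQ dn (toQ (right (tile i j))) - dotQ dn (toQ (left (tile i j))))
        = dotQ dn (toQ (right (tile h j))) - dotQ dn (toQ (left (tile 1 j))) := by
    intro j hj1 hj2
    exact telAux _ _ h hh (fun i hi1 hi2 => by rw [hhoriz i j hi1 hi2 hj1 hj2])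
  -- first coordinate of left labels is constant in i
  have H3 : ∀ i j, 1 ≤ i → i ≤ h → 1 ≤ j → j ≤ k →
      dotQ eQ (toQ (left (tile i j))) = dotQ eQ (toQ (left (tile 1 j))) := by
    intro i j hi1 hi2 hj1 hj2
    refine constAux (fun i => dotQ eQ (toQ (left (tile i j)))) h ?_ i hi1 hi2
    intro i hi1 hi2
    show dotQ eQ (toQ (left (tile (i + 1) j))) = dotQ eQ (toQ (left (tile i j)))
    rw [← hhoriz i j hi1 hi2 hj1 hj2, dotQ_eQ, dotQ_eQ,
      right_fst n (htile i j hi1 (by omega) hj1 hj2)]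
  -- first coordinate of bottom labels is constant in j
  have H4 : ∀ i j, 1 ≤ i → i ≤ h → 1 ≤ j → j ≤ k →
      dotQ eQ (toQ (bottom (tile i j))) = dotQ eQ (toQ (bottom (tile i 1))) := by
    intro i j hi1 hi2 hj1 hj2
    refine constAux (fun j => dotQ eQ (toQ (bottom (tile i j)))) k ?_ j hj1 hj2
    intro j hj1 hj2
    show dotQ eQ (toQ (bottom (tile i (j + 1)))) = dotQ eQ (toQ (bottom (tile i j)))
    rw [← hvert i j hi1 hi2 hj1 hj2, dotQ_eQ, dotQ_eQ,
      top_fst n (htile i j hi1 hi2 hj1 (by omega))]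
  -- double sum of the per-tile identity
  have dsum :
      ∑ i ∈ Finset.Icc 1 h, ∑ j ∈ Finset.Icc 1 k,
          (dotQ dn (toQ (top (tile i j))) - dotQ dn (toQ (bottom (tile i j)))
            - dotQ eQ (toQ (left (tile i j)))) =
      ∑ i ∈ Finset.Icc 1 h, ∑ j ∈ Finset.Icc 1 k,
          (dotQ dn (toQ (right (tile i j))) - dotQ dn (toQ (left (tile i j)))
            - dotQ eQ (toQ (bottom (tile i j)))) := by
    refine Finset.sum_congr rfl fun i hi => Finset.sum_congr rfl fun j hj => ?_
    rw [Finset.mem_Icc] at hi hj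
    exact tile_eq n hn (htile i j hi.1 hi.2 hj.1 hj.2)
  -- evaluate the left-hand double sum
  have lhs_eq :
      ∑ i ∈ Finset.Icc 1 h, ∑ j ∈ Finset.Icc 1 k,
          (dotQ dn (toQ (top (tile i j))) - dotQ dn (toQ (bottom (tile i j)))
            - dotQ eQ (toQ (left (tile i j)))) =
      (∑ i ∈ Finset.Icc 1 h, (dotQ dn (toQ (top (tile i k))) - dotQ dn (toQ (bottom (tile i 1)))))
        - (h : ℚ) * ∑ j ∈ Finset.Icc 1 k, dotQ eQ (toQ (left (tile 1 j))) := by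
    have : ∀ i ∈ Finset.Icc (1 : ℤ) h,
        ∑ j ∈ Finset.Icc 1 k,
          (dotQ dn (toQ (top (tile i j))) - dotQ dn (toQ (bottom (tile i j)))
            - dotQ eQ (toQ (left (tile i j)))) =
        (dotQ dn (toQ (top (tile i k))) - dotQ dn (toQ (bottom (tile i 1))))
          - ∑ j ∈ Finset.Icc 1 k, dotQ eQ (toQ (left (tile 1 j))) := by
      intro i hi
      rw [Finset.mem_Icc] at hi
      rw [Finset.sum_sub_distrib, H1 i hi.1 hi.2]
      congr 1
      exact Finset.sum_congr rfl fun j hj => by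
        rw [Finset.mem_Icc] at hj
        exact H3 i j hi.1 hi.2 hj.1 hj.2
    rw [Finset.sum_congr rfl this, Finset.sum_sub_distrib, Finset.sum_const,
      nsmul_eq_mul, castIccCard h hh]
  -- evaluate the right-hand double sum
  have rhs_eq :
      ∑ i ∈ Finset.Icc 1 h, ∑ j ∈ Finset.Icc 1 k,
          (dotQ dn (toQ (right (tile i j))) - dotQ dn (toQ (left (tile i j)))
            - dotQ eQ (toQ (bottom (tile i j)))) =
      (∑ j ∈ Finset.Icc 1 k, (dotQ dn (toQ (right (tile h j))) - dotQ dn (toQ (left (tile 1 j)))))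
        - (k : ℚ) * ∑ i ∈ Finset.Icc 1 h, dotQ eQ (toQ (bottom (tile i 1))) := by
    rw [Finset.sum_comm]
    have : ∀ j ∈ Finset.Icc (1 : ℤ) k,
        ∑ i ∈ Finset.Icc 1 h,
          (dotQ dn (toQ (right (tile i j))) - dotQ dn (toQ (left (tile i j)))
            - dotQ eQ (toQ (bottom (tile i j)))) =
        (dotQ dn (toQ (right (tile h j))) - dotQ dn (toQ (left (tile 1 j))))
          - ∑ i ∈ Finset.Icc 1 h, dotQ eQ (toQ (bottom (tile i 1))) := by
      intro j hj
      rw [Finset.mem_Icc] at hj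
      rw [Finset.sum_sub_distrib, H2 j hj.1 hj.2]
      congr 1
      exact Finset.sum_congr rfl fun i hi => by
        rw [Finset.mem_Icc] at hi
        exact H4 i j hi.1 hi.2 hj.1 hj.2
    rw [Finset.sum_congr rfl this, Finset.sum_sub_distrib, Finset.sum_const,
      nsmul_eq_mul, castIccCard k hk]
  have key := lhs_eq.symm.trans (dsum.trans rhs_eq)
  rw [Finset.sum_sub_distrib] at key
  -- reduce the goal to scalars
  simp only [dotQ_sub', dotQ_smul', dotQ_sum']
  rw [Finset.sum_sub_distrib] at key
  have expand1 : ∀ X Y Z : ℚ, (1 / (k : ℚ)) * ((1 / (h : ℚ)) * X - (1 / (h : ℚ)) * Y)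
        - (1 / (k : ℚ)) * Z = (1 / ((h : ℚ) * (k : ℚ))) * (X - Y - (h : ℚ) * Z) := by
    intro X Y Z; field_simp
  have expand2 : ∀ X Y Z : ℚ, (1 / (h : ℚ)) * ((1 / (k : ℚ)) * X - (1 / (k : ℚ)) * Y)
        - (1 / (h : ℚ)) * Z = (1 / ((h : ℚ) * (k : ℚ))) * (X - Y - (k : ℚ) * Z) := by
    intro X Y Z; field_simp
  rw [expand1, expand2, key]

end MetallicMean
end

section
/- For every integer n ≥ 1 and all x, y ∈ [0,1), one has Λ_n(x,y) = θ_n(Λ_n({x + β*}, y), Λ_n({y + β*}, x)). -/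
open scoped BigOperators

namespace MetallicMean

private lemma floor_eq_of {r : ℝ} {m : ℤ} (h1 : (m : ℝ) ≤ r) (h2 : r < m + 1) : ⌊r⌋ = m :=
  Int.floor_eq_iff.mpr ⟨h1, h2⟩

set_option maxHeartbeats 1000000 in
/-- For every integer n ≥ 1 and x, y ∈ [0,1),
Λ_n(x,y) = θ_n(Λ_n({x+β*}, y), Λ_n({y+β*}, x)). -/
theorem statement8 (n : ℤ) (hn : 1 ≤ n) (x y : ℝ)
    (hx : x ∈ Set.Ico (0 : ℝ) 1) (hy : y ∈ Set.Ico (0 : ℝ) 1) :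
    Lam n x y =
      theta n (Lam n (Int.fract (x + betaStar n)) y) (Lam n (Int.fract (y + betaStar n)) x) := by
  obtain ⟨hx0, hx1⟩ := hx
  obtain ⟨hy0, hy1⟩ := hy
  have hn1 : (1 : ℝ) ≤ (n : ℝ) := by exact_mod_cast hn
  have hsq : Real.sqrt ((n : ℝ) ^ 2 + 4) ^ 2 = (n : ℝ) ^ 2 + 4 := Real.sq_sqrt (by positivity)
  have hsnn : 0 ≤ Real.sqrt ((n : ℝ) ^ 2 + 4) := Real.sqrt_nonneg _
  have hb2 : beta n * beta n = n * beta n + 1 := by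
    unfold beta; nlinarith [hsq, hsnn]
  have hbgt : (n : ℝ) < beta n := by
    unfold beta; nlinarith [hsq, hsnn]
  have hblt : beta n < n + 1 := by nlinarith
  have hb1 : (1 : ℝ) < beta n := by linarith
  have hbs : betaStar n = (n : ℝ) - beta n := rfl
  have hinv : (beta n)⁻¹ = beta n - n := by
    have hb0 : beta n ≠ 0 := by linarith
    field_simp
    nlinarith
  set b := beta n with hbdef
  clear_value b
  have hc0 : 0 < b - n := by linarith
  have hc1 : b - n < 1 := by linarith
  have hcb : (b - n) * b = 1 := by nlinarith
  -- fract and floor computations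
  have fy : Int.fract (y + betaStar n) =
      if b - (n : ℝ) ≤ y then y + ((n : ℝ) - b) else y + ((n : ℝ) - b) + 1 := by
    rw [hbs]
    split_ifs with h
    · rw [show y + ((n:ℝ) - b) = y + ((n:ℝ) - b) from rfl,
        Int.fract_eq_self.mpr ⟨by linarith, by linarith⟩]
    · rw [Int.fract, floor_eq_of (m := -1) (by push_cast; linarith) (by push_cast; linarith)]
      push_cast; ring
  have fx : Int.fract (x + betaStar n) =
      if b - (n : ℝ) ≤ x then x + ((n : ℝ) - b) else x + ((n : ℝ) - b) + 1 := by
    rw [hbs]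
    split_ifs with h
    · rw [Int.fract_eq_self.mpr ⟨by linarith, by linarith⟩]
    · rw [Int.fract, floor_eq_of (m := -1) (by push_cast; linarith) (by push_cast; linarith)]
      push_cast; ring
  have ey : ⌊y + betaStar n + 1⌋ = if b - (n : ℝ) ≤ y then 1 else 0 := by
    rw [hbs]
    split_ifs with h
    · exact floor_eq_of (by push_cast; linarith) (by push_cast; linarith)
    · exact floor_eq_of (by push_cast; linarith) (by push_cast; linarith)
  have ex : ⌊x + betaStar n + 1⌋ = if b - (n : ℝ) ≤ x then 1 else 0 := by
    rw [hbs]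
    split_ifs with h
    · exact floor_eq_of (by push_cast; linarith) (by push_cast; linarith)
    · exact floor_eq_of (by push_cast; linarith) (by push_cast; linarith)
  simp only [Lam, theta, fx, fy, ex, ey]
  simp only [hbs, hinv, ← hbdef, Prod.mk.injEq]
  refine ⟨trivial, ?_, ?_⟩
  · -- second component
    by_cases hcy : b - (n : ℝ) ≤ y
    · simp only [if_pos hcy]
      rw [if_neg (by norm_num : ¬(1:ℤ) = 0)]
      refine floor_eq_of ?_ ?_
      · push_cast
        nlinarith [mul_nonneg (le_of_lt hc0) hx0]
      · push_cast
        nlinarith [mul_lt_mul_of_pos_left hx1 hc0]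
    · push_neg at hcy
      simp only [if_neg (not_le.mpr hcy)]
      simp only [if_true]
      have key : b * (y + ((n : ℝ) - b) + 1) + x + ((n : ℝ) - b) + 1 = (b * y + x) + (n : ℝ) := by
        nlinarith
      rw [key]
      rw [show ((n : ℝ) : ℝ) = ((n : ℤ) : ℝ) from by push_cast; ring, Int.floor_add_intCast]
      rcases lt_or_ge (b * y + x) 1 with hs | hs
      · rw [show ⌊b * y + x⌋ = 0 from floor_eq_of (by push_cast; nlinarith [mul_nonneg (show (0:ℝ) ≤ b from by linarith) hy0]) (by push_cast; linarith)]
        rw [show ((0 : ℤ) + n - n) = 0 from by ring]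
        refine floor_eq_of ?_ ?_
        · push_cast
          nlinarith [mul_nonneg (le_of_lt hc0) hx0]
        · push_cast
          nlinarith [mul_lt_mul_of_pos_left hs hc0]
      · rw [show ⌊b * y + x⌋ = 1 from floor_eq_of (by push_cast; linarith)
          (by push_cast; nlinarith [mul_lt_mul_of_pos_left hcy (show (0:ℝ) < b from by linarith)])]
        rw [show ((1 : ℤ) + n - n) = 1 from by ring]
        refine floor_eq_of ?_ ?_
        · push_cast
          nlinarith [mul_le_mul_of_nonneg_left hs (le_of_lt hc0)]
        · push_cast
          nlinarith [mul_lt_mul_of_pos_left hx1 hc0]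
  · -- third component
    by_cases hcx : b - (n : ℝ) ≤ x
    · simp only [if_pos hcx]
      rw [if_neg (by norm_num : ¬(1:ℤ) = 0)]
      have key : b * (x + ((n : ℝ) - b)) + y + ((n : ℝ) - b) + 1 =
          (b * x + y + ((n : ℝ) - b) + 1) - 1 := by nlinarith
      rw [key, show (b * x + y + ((n : ℝ) - b) + 1) - 1
          = (b * x + y + ((n : ℝ) - b) + 1) + ((-1 : ℤ) : ℝ) from by push_cast; ring,
        Int.floor_add_intCast]
      ring
    · push_neg at hcx
      simp only [if_neg (not_le.mpr hcx)]
      simp only [if_true]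
      by_cases hcy : b - (n : ℝ) ≤ y
      · simp only [if_pos hcy]
        rcases lt_or_ge (b * x + y) (1 + (b - n)) with hs | hs
        · rw [show ⌊(b - ↑n) * (y + (↑n - b)) + x + (↑n - b) + 1⌋ = 0 from floor_eq_of
            (by push_cast; nlinarith [mul_nonneg (le_of_lt hc0) (show 0 ≤ y - (b - n) from by linarith)])
            (by push_cast; nlinarith [mul_lt_mul_of_pos_left hs hc0])]
          refine floor_eq_of ?_ ?_
          · push_cast
            nlinarith [mul_nonneg (le_of_lt (lt_trans zero_lt_one hb1)) hx0]
          · push_cast; linarith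
        · rw [show ⌊(b - ↑n) * (y + (↑n - b)) + x + (↑n - b) + 1⌋ = 1 from floor_eq_of
            (by push_cast; nlinarith [mul_le_mul_of_nonneg_left hs (le_of_lt hc0)])
            (by push_cast; nlinarith [mul_lt_mul_of_pos_left hy1 hc0])]
          refine floor_eq_of ?_ ?_
          · push_cast; linarith
          · push_cast
            nlinarith [mul_lt_mul_of_pos_left hcx (show (0:ℝ) < b from by linarith)]
      · push_neg at hcy
        simp only [if_neg (not_le.mpr hcy)]
        rcases lt_or_ge (b * x + y) (b - n) with hs | hs
        · rw [show ⌊(b - ↑n) * (y + (↑n - b) + 1) + x + (↑n - b) + 1⌋ = 0 from floor_eq_of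
            (by push_cast; nlinarith [mul_nonneg (le_of_lt hc0) hy0])
            (by push_cast; nlinarith [mul_lt_mul_of_pos_left hs hc0])]
          rw [show ((0 : ℤ) + 0) = 0 from rfl]
          refine floor_eq_of ?_ ?_
          · push_cast
            nlinarith [mul_nonneg (le_of_lt (lt_trans zero_lt_one hb1)) hx0]
          · push_cast; linarith
        · rw [show ⌊(b - ↑n) * (y + (↑n - b) + 1) + x + (↑n - b) + 1⌋ = 1 from floor_eq_of
            (by push_cast; nlinarith [mul_le_mul_of_nonneg_left hs (le_of_lt hc0)])
            (by push_cast; nlinarith [mul_lt_mul_of_pos_left hcy hc0])]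
          rw [show ((1 : ℤ) + 0) = 1 from rfl]
          refine floor_eq_of ?_ ?_
          · push_cast; linarith
          · push_cast
            nlinarith [mul_lt_mul_of_pos_left hcx (show (0:ℝ) < b from by linarith)]

end MetallicMean
end

section
/- For every integer n ≥ 1 and every (x,y) ∈ ℝ²: (i) the reflection of TILE_n(x,y) under (r,t,ℓ,b) ↦ (t,r,b,ℓ) equals TILE_n(y,x); (ii) all four labels of TILE_n(x,y) lie in V_n; (iii) TILE_n(x,y) ∈ 𝒞_n, i.e., its right label equals θ_n applied to its (left, bottom) labels and its top label equals θ_n applied to its (bottom, left) labels. -/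
open scoped BigOperators

namespace MetallicMean


private lemma beta_core (n : ℤ) (hn : 1 ≤ n) :
    (n:ℝ) < beta n ∧ beta n < n + 1 ∧ beta n * beta n = n * beta n + 1 := by
  have h4 : (0:ℝ) ≤ (n:ℝ)^2 + 4 := by positivity
  have hsq : Real.sqrt ((n:ℝ)^2+4) ^ 2 = (n:ℝ)^2 + 4 := Real.sq_sqrt h4
  have hn' : (1:ℝ) ≤ n := by exact_mod_cast hn
  have hr0 : (0:ℝ) ≤ Real.sqrt ((n:ℝ)^2+4) := Real.sqrt_nonneg _
  have h1 : (n:ℝ) < Real.sqrt ((n:ℝ)^2+4) := by nlinarith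
  have h2 : Real.sqrt ((n:ℝ)^2+4) < n + 2 := by nlinarith
  unfold beta
  refine ⟨by linarith, by linarith, by linear_combination hsq / 4⟩

private lemma fl_eq (r : ℝ) (k : ℤ) (h1 : (k:ℝ) ≤ r) (h2 : r < k + 1) : ⌊r⌋ = k := by
  rw [Int.floor_eq_iff]; exact ⟨h1, h2⟩

private lemma lam_mem_V (n : ℤ) (hn : 1 ≤ n) {x y : ℝ}
    (hx0 : 0 ≤ x) (hx1 : x < 1) (hy0 : 0 ≤ y) (hy1 : y < 1) :
    Lam n x y ∈ Vset n := by
  simp only [Lam, Vset, Set.mem_setOf_eq]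
  obtain ⟨hnb, hb1, hbb⟩ := beta_core n hn
  set b := beta n with hbdef
  have hn' : (1:ℝ) ≤ n := by exact_mod_cast hn
  have hb0 : (0:ℝ) < b := by linarith
  have hbn0 : (0:ℝ) < b - n := by linarith
  have hinv : b⁻¹ = b - (n:ℝ) := by
    field_simp
    nlinarith
  have hs : betaStar n = (n:ℝ) - b := rfl
  have hbx : b * x < b := by nlinarith
  have hbnx : (b - n) * x < b - n := by nlinarith
  have hbnx0 : 0 ≤ (b - n) * x := by positivity
  rw [hinv, hs]
  refine ⟨Int.le_floor.mpr (by push_cast; linarith),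
    Int.floor_le_floor (by nlinarith),
    Int.floor_le_floor (by nlinarith),
    ?_, ?_⟩
  · have h := Int.floor_lt.mpr (show b*x + y + ((n:ℝ) - b) + 1 < ((n + 2 : ℤ):ℝ) by push_cast; nlinarith)
    omega
  · have h := Int.floor_lt.mpr (show (b - n)*x + y + ((n:ℝ) - b) + 1 < ((2:ℤ):ℝ) by push_cast; nlinarith)
    omega

set_option maxHeartbeats 2000000 in
private lemma lam_key (n : ℤ) (hn : 1 ≤ n) {x y : ℝ}
    (hx0 : 0 ≤ x) (hx1 : x < 1) (hy0 : 0 ≤ y) (hy1 : y < 1) :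
    Lam n x y =
      theta n (Lam n (Int.fract (x + betaStar n)) y)
              (Lam n (Int.fract (y + betaStar n)) x) := by
  simp only [Lam, theta, betaStar, Prod.mk.injEq]
  obtain ⟨hnb, hb1, hbb⟩ := beta_core n hn
  set b := beta n with hbdef
  have hn' : (1:ℝ) ≤ n := by exact_mod_cast hn
  have hb0 : (0:ℝ) < b := by linarith
  have hbgt1 : (1:ℝ) < b := by linarith
  have hbn0 : (0:ℝ) < b - n := by linarith
  have hinv : b⁻¹ = b - (n:ℝ) := by field_simp; nlinarith
  have hsgt : (-1:ℝ) < (n:ℝ) - b := by linarith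
  have hslt : (n:ℝ) - b < 0 := by linarith
  rw [hinv]
  have fract_lt : ∀ t : ℝ, 0 ≤ t → t + ((n:ℝ) - b) < 0 →
      Int.fract (t + ((n:ℝ) - b)) = t + ((n:ℝ) - b) + 1 := by
    intro t ht0 ht
    have h1 : ⌊t + ((n:ℝ) - b)⌋ = -1 := fl_eq _ _ (by push_cast; linarith) (by push_cast; linarith)
    rw [Int.fract, h1]; push_cast; ring
  have fract_ge : ∀ t : ℝ, t < 1 → 0 ≤ t + ((n:ℝ) - b) →
      Int.fract (t + ((n:ℝ) - b)) = t + ((n:ℝ) - b) :=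
    fun t ht1 ht => Int.fract_eq_self.mpr ⟨ht, by linarith⟩
  refine ⟨trivial, ?_, ?_⟩
  · rcases lt_or_ge (y + ((n:ℝ) - b)) 0 with hyc | hyc
    · have hfy := fract_lt y hy0 hyc
      have hu0 : ⌊y + ((n:ℝ) - b) + 1⌋ = 0 := fl_eq _ _ (by push_cast; linarith) (by push_cast; linarith)
      rw [hfy]; simp only [show ⌊y + ((n:ℝ) - beta n) + 1⌋ = 0 from hu0, ↓reduceIte]
      rw [show b * (y + ((n:ℝ) - b) + 1) + x + ((n:ℝ) - b) + 1 = (b * y + x) + (n:ℝ) by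
        linear_combination -hbb]
      rw [Int.floor_add_intCast (b * y + x) n, add_sub_cancel_right]
      have hby : b * y < 1 := by nlinarith
      rcases lt_or_ge (b * y + x) 1 with hthr | hthr
      · rw [fl_eq (b*y+x) 0 (by push_cast; nlinarith) (by push_cast; linarith),
          fl_eq _ 0 (by push_cast; nlinarith) (by push_cast; nlinarith)]
      · rw [fl_eq (b*y+x) 1 (by push_cast; linarith) (by push_cast; linarith),
          fl_eq _ 1 (by push_cast; nlinarith) (by push_cast; nlinarith)]
    · have hu1 : ⌊y + ((n:ℝ) - b) + 1⌋ = 1 := fl_eq _ _ (by push_cast; linarith) (by push_cast; linarith)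
      simp only [show ⌊y + ((n:ℝ) - beta n) + 1⌋ = 1 from hu1, one_ne_zero, ↓reduceIte]
      have hbnx : (b - n) * x < b - n := by nlinarith
      exact fl_eq _ 1 (by push_cast; nlinarith [mul_nonneg hbn0.le hx0]) (by push_cast; nlinarith)
  · rcases lt_or_ge (x + ((n:ℝ) - b)) 0 with hxc | hxc
    · have hv0 : ⌊x + ((n:ℝ) - b) + 1⌋ = 0 := fl_eq _ _ (by push_cast; linarith) (by push_cast; linarith)
      simp only [show ⌊x + ((n:ℝ) - beta n) + 1⌋ = 0 from hv0, ↓reduceIte]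
      have hbx : b * x < 1 := by nlinarith
      have hbx0 : 0 ≤ b * x := mul_nonneg hb0.le hx0
      rcases lt_or_ge (y + ((n:ℝ) - b)) 0 with hyc | hyc
      · have hfy := fract_lt y hy0 hyc
        have hu0 : ⌊y + ((n:ℝ) - b) + 1⌋ = 0 := fl_eq _ _ (by push_cast; linarith) (by push_cast; linarith)
        rw [hfy, hu0, add_zero]
        have hident : b * ((b - n) * (y + ((n:ℝ) - b) + 1) + x + ((n:ℝ) - b)) = b*x + y + ((n:ℝ) - b) := by
          linear_combination (y + ((n:ℝ) - b)) * hbb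
        rcases lt_or_ge (b*x + y + ((n:ℝ) - b)) 0 with hthr | hthr
        · rw [fl_eq _ 0 (by push_cast; linarith) (by push_cast; linarith),
            fl_eq _ 0 (by push_cast; nlinarith) (by push_cast; nlinarith)]
        · rw [fl_eq _ 1 (by push_cast; linarith) (by push_cast; nlinarith),
            fl_eq _ 1 (by push_cast; nlinarith) (by push_cast; nlinarith)]
      · have hfy := fract_ge y hy1 hyc
        have hu1 : ⌊y + ((n:ℝ) - b) + 1⌋ = 1 := fl_eq _ _ (by push_cast; linarith) (by push_cast; linarith)
        rw [hfy, hu1]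
        have hident : b * ((b - n) * (y + ((n:ℝ) - b)) + x + ((n:ℝ) - b)) = b*x + y + ((n:ℝ) - b) - 1 := by
          linear_combination (y + ((n:ℝ) - b) - 1) * hbb
        rcases lt_or_ge (b*x + y + ((n:ℝ) - b)) 1 with hthr | hthr
        · rw [fl_eq _ 1 (by push_cast; nlinarith) (by push_cast; linarith),
            fl_eq _ 0 (by push_cast; nlinarith) (by push_cast; nlinarith)]
          norm_num
        · rw [fl_eq _ 2 (by push_cast; linarith) (by push_cast; nlinarith),
            fl_eq _ 1 (by push_cast; nlinarith) (by push_cast; nlinarith)]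
          norm_num
    · have hv1 : ⌊x + ((n:ℝ) - b) + 1⌋ = 1 := fl_eq _ _ (by push_cast; linarith) (by push_cast; linarith)
      simp only [show ⌊x + ((n:ℝ) - beta n) + 1⌋ = 1 from hv1, one_ne_zero, ↓reduceIte]
      rw [fract_ge x hx1 hxc,
        show b * (x + ((n:ℝ) - b)) + y + ((n:ℝ) - b) + 1 = b*x + y + ((n:ℝ) - b) by
          linear_combination -hbb]
      exact (Int.floor_add_one (b*x + y + ((n:ℝ) - b))).symm ▸ rfl

/-- For every (x,y) ∈ ℝ²: (i) the reflection of TILE_n(x,y) is TILE_n(y,x);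
(ii) all four labels of TILE_n(x,y) lie in V_n; (iii) TILE_n(x,y) ∈ 𝒞_n. -/
theorem statement9 (n : ℤ) (hn : 1 ≤ n) (x y : ℝ) :
    reflect (TileAt n x y) = TileAt n y x ∧
    (right (TileAt n x y) ∈ Vset n ∧ top (TileAt n x y) ∈ Vset n ∧
      left (TileAt n x y) ∈ Vset n ∧ bottom (TileAt n x y) ∈ Vset n) ∧
    TileAt n x y ∈ Cset n := by
  have hfr : ∀ t : ℝ, Int.fract (Int.fract t + betaStar n) = Int.fract (t + betaStar n) := by
    intro t
    rw [show Int.fract t + betaStar n = t + betaStar n - (⌊t⌋:ℝ) by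
        rw [← Int.self_sub_floor]; ring,
      Int.fract_sub_intCast]
  have hkey : ∀ a c : ℝ, Lam n (Int.fract a) (Int.fract c) =
      theta n (Lam n (Int.fract (a + betaStar n)) (Int.fract c))
              (Lam n (Int.fract (c + betaStar n)) (Int.fract a)) := by
    intro a c
    have h := lam_key n hn (Int.fract_nonneg a) (Int.fract_lt_one a)
      (Int.fract_nonneg c) (Int.fract_lt_one c)
    rwa [hfr a, hfr c] at h
  have hmem : ∀ a c : ℝ, Lam n (Int.fract a) (Int.fract c) ∈ Vset n := fun a c =>
    lam_mem_V n hn (Int.fract_nonneg a) (Int.fract_lt_one a)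
      (Int.fract_nonneg c) (Int.fract_lt_one c)
  refine ⟨rfl, ⟨hmem x y, hmem y x, hmem (x + betaStar n) y, hmem (y + betaStar n) x⟩, ?_⟩
  refine ⟨Lam n (Int.fract (x + betaStar n)) (Int.fract y),
    Lam n (Int.fract (y + betaStar n)) (Int.fract x),
    hmem (x + betaStar n) y, hmem (y + betaStar n) x, ?_, ?_, ?_⟩
  · rw [← hkey x y]; exact hmem x y
  · rw [← hkey y x]; exact hmem y x
  · show (Lam n (Int.fract x) (Int.fract y), Lam n (Int.fract y) (Int.fract x),
      Lam n (Int.fract (x + betaStar n)) (Int.fract y),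
      Lam n (Int.fract (y + betaStar n)) (Int.fract x)) = _
    rw [hkey x y, hkey y x]


end MetallicMean
end

section
/- Let n ≥ 1 be an integer. For every (x,y) ∈ [0,1]², the configuration c_(x,y) : ℤ² → (ℤ³)⁴ defined by c_(x,y)(i,j) = TILE_n(x + iβ⁻¹, y + jβ⁻¹) is a valid tiling of the plane by the metallic mean Wang tile set 𝒯_n: every tile c_(x,y)(i,j) belongs to 𝒯_n, the right label of c_(x,y)(i,j) equals the left label of c_(x,y)(i+1,j), and the top label of c_(x,y)(i,j) equals the bottom label of c_(x,y)(i,j+1), for all (i,j) ∈ ℤ². -/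
open scoped BigOperators

namespace MetallicMean

/-- Horizontal blue tiles (0 ≤ i ≤ n - 1). -/
def blueHT (n : ℤ) : Set Tile :=
  {τ | ∃ i : ℤ, 0 ≤ i ∧ i ≤ n - 1 ∧
    τ = ((0, 0, i + 1), (1, 1, 1), (0, 0, i), (1, 1, n))}

/-- The 7 junction tiles (excluding the two pairs ((0,0,n),(0,1,n+1)) and
((0,1,n+1),(0,0,n))). -/
def junctionT (n : ℤ) : Set Tile :=
  {τ | ∃ u v : Vec3, u ∈ junctionVecs n ∧ v ∈ junctionVecs n ∧
    ¬(u = (0, 0, n) ∧ v = (0, 1, n + 1)) ∧ ¬(u = (0, 1, n + 1) ∧ v = (0, 0, n)) ∧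
    τ = ((0, v.2.2 - n, v.2.1), (0, u.2.2 - n, u.2.1), u, v)}

/-- The metallic mean Wang tile set 𝒯_n, given by its explicit description. -/
def TsetExplicit (n : ℤ) : Set Tile :=
  whiteT n ∪ blueHT n ∪ yellowH n ∪ greenH n ∪
    reflect '' blueHT n ∪ reflect '' yellowH n ∪ reflect '' greenH n ∪ junctionT n

end MetallicMean

namespace MetallicMean

lemma flr {z : ℝ} {m : ℤ} (h1 : (m:ℝ) ≤ z) (h2 : z < m + 1) : ⌊z⌋ = m :=
  Int.floor_eq_iff.mpr ⟨h1, h2⟩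

lemma beta_facts (n : ℤ) (hn : 1 ≤ n) :
    (n:ℝ) < beta n ∧ beta n < n + 1 ∧ beta n * (beta n)⁻¹ = 1 ∧
      (beta n)⁻¹ = beta n - n ∧ betaStar n = -(beta n)⁻¹ := by
  have hn' : (1:ℝ) ≤ (n:ℝ) := by exact_mod_cast hn
  have h4 : (0:ℝ) ≤ (n:ℝ)^2 + 4 := by positivity
  have hs : Real.sqrt ((n:ℝ)^2+4) ^ 2 = (n:ℝ)^2 + 4 := Real.sq_sqrt h4
  have hsgt : (n:ℝ) < Real.sqrt ((n:ℝ)^2+4) := by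
    rw [show ((n:ℝ)^2+4) = (n:ℝ)^2+4 from rfl] at *
    nlinarith [Real.sqrt_nonneg ((n:ℝ)^2+4)]
  have hslt : Real.sqrt ((n:ℝ)^2+4) < (n:ℝ) + 2 := by
    nlinarith [Real.sqrt_nonneg ((n:ℝ)^2+4)]
  have hb : (n:ℝ) < beta n := by unfold beta; linarith
  have hb1 : beta n < n + 1 := by unfold beta; linarith
  have hb0 : 0 < beta n := by linarith
  have hsq : beta n ^ 2 = n * beta n + 1 := by
    unfold beta; linear_combination hs / 4
  have hbe : beta n * (beta n)⁻¹ = 1 := mul_inv_cancel₀ (ne_of_gt hb0)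
  have hinv : (beta n)⁻¹ = beta n - n := by
    refine inv_eq_of_mul_eq_one_right ?_
    linear_combination hsq
  exact ⟨hb, hb1, hbe, hinv, by unfold betaStar; rw [hinv]; ring⟩

end MetallicMean
namespace MetallicMean

set_option maxHeartbeats 2000000 in
lemma caseA (n : ℤ) (hn : 1 ≤ n) (x y : ℝ) (hx1 : x < 1) (hy1 : y < 1)
    (hex : (beta n)⁻¹ ≤ x) (hey : (beta n)⁻¹ ≤ y) : TileAt n x y ∈ whiteT n := by
  obtain ⟨hb, hb1, hbe, hen, hsb⟩ := beta_facts n hn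
  have hn' : (1:ℝ) ≤ (n:ℝ) := by exact_mod_cast hn
  set b := beta n with hbdef
  set e := b⁻¹ with hedef
  have hb0 : 0 < b := by linarith
  have he0 : 0 < e := by rw [hen]; linarith
  have he1 : e < 1 := by rw [hen]; linarith
  have hx0 : 0 ≤ x := le_trans he0.le hex
  have hy0 : 0 ≤ y := le_trans he0.le hey
  have f1 : Int.fract x = x := Int.fract_eq_self.mpr ⟨hx0, hx1⟩
  have f2 : Int.fract y = y := Int.fract_eq_self.mpr ⟨hy0, hy1⟩
  have f3 : Int.fract (x + betaStar n) = x - e := by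
    rw [hsb, ← sub_eq_add_neg]
    exact Int.fract_eq_self.mpr ⟨by linarith, by linarith⟩
  have f4 : Int.fract (y + betaStar n) = y - e := by
    rw [hsb, ← sub_eq_add_neg]
    exact Int.fract_eq_self.mpr ⟨by linarith, by linarith⟩
  obtain ⟨i, hi1, hi2⟩ : ∃ i : ℤ, (i:ℝ) ≤ b*x + y - e ∧ b*x + y - e < i + 1 :=
    ⟨⌊b*x + y - e⌋, Int.floor_le _, Int.lt_floor_add_one _⟩
  obtain ⟨j, hj1, hj2⟩ : ∃ j : ℤ, (j:ℝ) ≤ b*y + x - e ∧ b*y + x - e < j + 1 :=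
    ⟨⌊b*y + x - e⌋, Int.floor_le _, Int.lt_floor_add_one _⟩
  have hbx : 1 ≤ b * x := by nlinarith [mul_le_mul_of_nonneg_left hex hb0.le]
  have hby : 1 ≤ b * y := by nlinarith [mul_le_mul_of_nonneg_left hey hb0.le]
  have hbx1 : b * x < b := by nlinarith
  have hby1 : b * y < b := by nlinarith
  have hexx : e * x < e := by nlinarith
  have heyy : e * y < e := by nlinarith
  have hexx0 : 0 ≤ e * x := mul_nonneg he0.le hx0
  have heyy0 : 0 ≤ e * y := mul_nonneg he0.le hy0
  have hexe : e * e ≤ e * x := mul_le_mul_of_nonneg_left hex he0.le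
  have heye : e * e ≤ e * y := mul_le_mul_of_nonneg_left hey he0.le
  have hee0 : 0 < e * e := mul_pos he0 he0
  refine ⟨i, j, ?_, ?_, ?_, ?_, ?_⟩
  · have h1 : (1:ℝ) < (i:ℝ) + 1 := by linarith
    have : (1:ℤ) < i + 1 := by exact_mod_cast h1
    omega
  · have h1 : (i:ℝ) < (n:ℝ) + 1 := by linarith [hen]
    have : i < n + 1 := by exact_mod_cast h1
    omega
  · have h1 : (1:ℝ) < (j:ℝ) + 1 := by linarith
    have : (1:ℤ) < j + 1 := by exact_mod_cast h1
    omega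
  · have h1 : (j:ℝ) < (n:ℝ) + 1 := by linarith [hen]
    have : j < n + 1 := by exact_mod_cast h1
    omega
  · have A1 : ⌊y + -e + 1⌋ = (1:ℤ) := by apply flr <;> push_cast <;> linarith
    have A2 : ⌊x + -e + 1⌋ = (1:ℤ) := by apply flr <;> push_cast <;> linarith
    have A3 : ⌊e*x + y + -e + 1⌋ = (1:ℤ) := by apply flr <;> push_cast <;> linarith
    have A4 : ⌊e*y + x + -e + 1⌋ = (1:ℤ) := by apply flr <;> push_cast <;> linarith
    have A5 : ⌊b*x + y + -e + 1⌋ = i + 1 := by apply flr <;> push_cast <;> linarith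
    have A6 : ⌊b*y + x + -e + 1⌋ = j + 1 := by apply flr <;> push_cast <;> linarith
    have A7 : ⌊e*(x - e) + y + -e + 1⌋ = (1:ℤ) := by apply flr <;> push_cast <;> nlinarith
    have A8 : ⌊e*(y - e) + x + -e + 1⌋ = (1:ℤ) := by apply flr <;> push_cast <;> nlinarith
    have A9 : ⌊b*(x - e) + y + -e + 1⌋ = i := by apply flr <;> push_cast <;> nlinarith [hbe, hi1, hi2]
    have A10 : ⌊b*(y - e) + x + -e + 1⌋ = j := by apply flr <;> push_cast <;> nlinarith [hbe, hj1, hj2]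
    unfold TileAt Lam
    rw [f1, f2, f3, f4, hsb]
    rw [A1, A2, A3, A4, A5, A6, A7, A8, A9, A10]

end MetallicMean
namespace MetallicMean

set_option maxHeartbeats 2000000 in
lemma caseHoriz (n : ℤ) (hn : 1 ≤ n) (x y : ℝ) (hx1 : x < 1) (hy0 : 0 ≤ y)
    (hye : y < (beta n)⁻¹) (hex : (beta n)⁻¹ ≤ x) :
    TileAt n x y ∈ blueHT n ∪ yellowH n ∪ greenH n := by
  obtain ⟨hb, hb1, hbe, hen, hsb⟩ := beta_facts n hn
  have hn' : (1:ℝ) ≤ (n:ℝ) := by exact_mod_cast hn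
  set b := beta n with hbdef
  set e := b⁻¹ with hedef
  have hb0 : 0 < b := by linarith
  have hbge1 : 1 ≤ b := by linarith
  have he0 : 0 < e := by rw [hen]; linarith
  have he1 : e < 1 := by rw [hen]; linarith
  have hx0 : 0 ≤ x := le_trans he0.le hex
  have hy1 : y < 1 := lt_trans hye he1
  have f1 : Int.fract x = x := Int.fract_eq_self.mpr ⟨hx0, hx1⟩
  have f2 : Int.fract y = y := Int.fract_eq_self.mpr ⟨hy0, hy1⟩
  have f3 : Int.fract (x + betaStar n) = x - e := by
    rw [hsb, ← sub_eq_add_neg]; exact Int.fract_eq_self.mpr ⟨by linarith, by linarith⟩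
  have f4 : Int.fract (y + betaStar n) = y + 1 - e := by
    rw [hsb, ← sub_eq_add_neg]
    have h : y - e = (y + 1 - e) + ((-1 : ℤ) : ℝ) := by push_cast; ring
    rw [h, Int.fract_add_intCast]
    exact Int.fract_eq_self.mpr ⟨by linarith, by linarith⟩
  obtain ⟨i, hi1, hi2⟩ : ∃ i : ℤ, (i:ℝ) ≤ b*x + y - e ∧ b*x + y - e < i + 1 :=
    ⟨⌊b*x + y - e⌋, Int.floor_le _, Int.lt_floor_add_one _⟩
  have hbx : 1 ≤ b * x := by nlinarith [mul_le_mul_of_nonneg_left hex hb0.le]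
  have hbx1 : b * x < b := by nlinarith
  have hby0 : 0 ≤ b * y := mul_nonneg hb0.le hy0
  have hby1 : b * y < 1 := by nlinarith [mul_lt_mul_of_pos_left hye hb0]
  have hexx : e * x < e := by nlinarith
  have hexe : e * e ≤ e * x := mul_le_mul_of_nonneg_left hex he0.le
  have heyy0 : 0 ≤ e * y := mul_nonneg he0.le hy0
  have heye : e * y < e * e := by nlinarith [mul_lt_mul_of_pos_left hye he0]
  have hee0 : 0 < e * e := mul_pos he0 he0
  have hee1 : e * e < e := by nlinarith
  have heby : e * (b * y) = y := by rw [← mul_assoc, mul_comm e b, hbe, one_mul]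
  have hebx : e * (b * x) = x := by rw [← mul_assoc, mul_comm e b, hbe, one_mul]
  have hi0 : 0 ≤ i := by
    have h1 : (0:ℝ) < (i:ℝ) + 1 := by linarith
    have : (0:ℤ) < i + 1 := by exact_mod_cast h1
    omega
  have hin : i ≤ n := by
    have h1 : (i:ℝ) < (n:ℝ) + 1 := by linarith [hen]
    have : i < n + 1 := by exact_mod_cast h1
    omega
  have R1 : ⌊y + -e + 1⌋ = (0:ℤ) := by apply flr <;> push_cast <;> linarith
  have T1 : ⌊x + -e + 1⌋ = (1:ℤ) := by apply flr <;> push_cast <;> linarith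
  have T2 : ⌊e*y + x + -e + 1⌋ = (1:ℤ) := by apply flr <;> push_cast <;> linarith
  have B2 : ⌊e*(y + 1 - e) + x + -e + 1⌋ = (1:ℤ) := by apply flr <;> push_cast <;> nlinarith
  have R3 : ⌊b*x + y + -e + 1⌋ = i + 1 := by apply flr <;> push_cast <;> linarith
  have L3 : ⌊b*(x - e) + y + -e + 1⌋ = i := by
    apply flr <;> push_cast <;> nlinarith [hbe, hi1, hi2]
  rcases lt_or_ge (b*y + x) 1 with hc1 | hg
  · -- blue
    have hcc : y + e*x < e := by nlinarith [mul_lt_mul_of_pos_left hc1 he0, heby]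
    have R2 : ⌊e*x + y + -e + 1⌋ = (0:ℤ) := by apply flr <;> push_cast <;> linarith
    have L2 : ⌊e*(x - e) + y + -e + 1⌋ = (0:ℤ) := by apply flr <;> push_cast <;> nlinarith
    have T3 : ⌊b*y + x + -e + 1⌋ = (1:ℤ) := by apply flr <;> push_cast <;> linarith
    have B3 : ⌊b*(y + 1 - e) + x + -e + 1⌋ = n := by
      apply flr <;> push_cast <;> nlinarith [hbe, hen]
    have hbb1 : 1 ≤ b*b := by nlinarith
    have hiub : i ≤ n - 1 := by
      have h2 : b*x + y < b := by
        nlinarith [mul_lt_mul_of_pos_left hc1 hb0, mul_nonneg (sub_nonneg.mpr hbb1) hy0]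
      have h1 : (i:ℝ) < (n:ℝ) := by linarith [hen]
      have : i < n := by exact_mod_cast h1
      omega
    refine Or.inl (Or.inl ⟨i, hi0, hiub, ?_⟩)
    unfold TileAt Lam
    rw [f1, f2, f3, f4, hsb, R1, T1, T2, B2, R3, L3, R2, L2, T3, B3]
  · rcases lt_or_ge (b*y + x) (1 + e) with hc2 | hc3
    · -- green
      have hcc : e ≤ y + e*x := by nlinarith [mul_le_mul_of_nonneg_left hg he0.le, heby]
      have hcc2 : y + e*x < e + e*e := by nlinarith [mul_lt_mul_of_pos_left hc2 he0, heby]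
      have R2 : ⌊e*x + y + -e + 1⌋ = (1:ℤ) := by apply flr <;> push_cast <;> linarith
      have L2 : ⌊e*(x - e) + y + -e + 1⌋ = (0:ℤ) := by apply flr <;> push_cast <;> nlinarith
      have T3 : ⌊b*y + x + -e + 1⌋ = (1:ℤ) := by apply flr <;> push_cast <;> linarith
      have B3 : ⌊b*(y + 1 - e) + x + -e + 1⌋ = n + 1 := by
        apply flr <;> push_cast <;> nlinarith [hbe, hen]
      refine Or.inr ⟨i, hi0, hin, ?_⟩
      unfold TileAt Lam
      rw [f1, f2, f3, f4, hsb, R1, T1, T2, B2, R3, L3, R2, L2, T3, B3]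
    · -- yellow
      have hcc : e + e*e ≤ y + e*x := by
        nlinarith [mul_le_mul_of_nonneg_left hc3 he0.le, heby]
      have R2 : ⌊e*x + y + -e + 1⌋ = (1:ℤ) := by apply flr <;> push_cast <;> linarith
      have L2 : ⌊e*(x - e) + y + -e + 1⌋ = (1:ℤ) := by apply flr <;> push_cast <;> nlinarith
      have T3 : ⌊b*y + x + -e + 1⌋ = (2:ℤ) := by apply flr <;> push_cast <;> linarith
      have B3 : ⌊b*(y + 1 - e) + x + -e + 1⌋ = n + 1 := by
        apply flr <;> push_cast <;> nlinarith [hbe, hen]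
      have hxy : y ≤ x := by linarith
      have hilb : 1 ≤ i := by
        have key : 1 + e ≤ b*x + y := by
          nlinarith [mul_nonneg (sub_nonneg.mpr hbge1) (sub_nonneg.mpr hxy)]
        have h1 : (1:ℝ) < (i:ℝ) + 1 := by linarith
        have : (1:ℤ) < i + 1 := by exact_mod_cast h1
        omega
      refine Or.inl (Or.inr ⟨i, hilb, hin, ?_⟩)
      unfold TileAt Lam
      rw [f1, f2, f3, f4, hsb, R1, T1, T2, B2, R3, L3, R2, L2, T3, B3]

end MetallicMean
namespace MetallicMean

set_option maxHeartbeats 4000000 in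
lemma caseD (n : ℤ) (hn : 1 ≤ n) (x y : ℝ) (hx0 : 0 ≤ x) (hy0 : 0 ≤ y)
    (hxe : x < (beta n)⁻¹) (hye : y < (beta n)⁻¹) :
    TileAt n x y ∈ junctionT n := by
  obtain ⟨hb, hb1, hbe, hen, hsb⟩ := beta_facts n hn
  have hn' : (1:ℝ) ≤ (n:ℝ) := by exact_mod_cast hn
  set b := beta n with hbdef
  set e := b⁻¹ with hedef
  have hb0 : 0 < b := by linarith
  have hbge1 : 1 ≤ b := by linarith
  have he0 : 0 < e := by rw [hen]; linarith
  have he1 : e < 1 := by rw [hen]; linarith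
  have hx1 : x < 1 := lt_trans hxe he1
  have hy1 : y < 1 := lt_trans hye he1
  have f1 : Int.fract x = x := Int.fract_eq_self.mpr ⟨hx0, hx1⟩
  have f2 : Int.fract y = y := Int.fract_eq_self.mpr ⟨hy0, hy1⟩
  have f3 : Int.fract (x + betaStar n) = x + 1 - e := by
    rw [hsb, ← sub_eq_add_neg]
    have h : x - e = (x + 1 - e) + ((-1 : ℤ) : ℝ) := by push_cast; ring
    rw [h, Int.fract_add_intCast]
    exact Int.fract_eq_self.mpr ⟨by linarith, by linarith⟩
  have f4 : Int.fract (y + betaStar n) = y + 1 - e := by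
    rw [hsb, ← sub_eq_add_neg]
    have h : y - e = (y + 1 - e) + ((-1 : ℤ) : ℝ) := by push_cast; ring
    rw [h, Int.fract_add_intCast]
    exact Int.fract_eq_self.mpr ⟨by linarith, by linarith⟩
  have heby : e * (b * y) = y := by rw [← mul_assoc, mul_comm e b, hbe, one_mul]
  have hebx : e * (b * x) = x := by rw [← mul_assoc, mul_comm e b, hbe, one_mul]
  have es : e * (b*x + y) = x + e*y := by rw [mul_add, hebx]
  have et : e * (b*y + x) = y + e*x := by rw [mul_add, heby]
  have hbx0 : 0 ≤ b * x := mul_nonneg hb0.le hx0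
  have hby0 : 0 ≤ b * y := mul_nonneg hb0.le hy0
  have hbx1 : b * x < 1 := by nlinarith [mul_lt_mul_of_pos_left hxe hb0]
  have hby1 : b * y < 1 := by nlinarith [mul_lt_mul_of_pos_left hye hb0]
  have hex0 : 0 ≤ e * x := mul_nonneg he0.le hx0
  have hey0 : 0 ≤ e * y := mul_nonneg he0.le hy0
  have hexe : e * x < e * e := mul_lt_mul_of_pos_left hxe he0
  have heye : e * y < e * e := mul_lt_mul_of_pos_left hye he0
  have hee1 : e * e < e := by nlinarith
  have hbbe : b * b * e = b := by rw [mul_assoc, hbe, mul_one]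
  have hbb1 : 1 ≤ b * b := by nlinarith
  have imp1 : 1 ≤ b*x + y → e ≤ b*y + x := fun h => by
    nlinarith [mul_nonneg hb0.le (by linarith : (0:ℝ) ≤ b*x + y - 1),
      mul_nonneg (by linarith : (0:ℝ) ≤ b*b - 1) (by linarith : (0:ℝ) ≤ e - x), hbbe]
  have imp2 : 1 ≤ b*y + x → e ≤ b*x + y := fun h => by
    nlinarith [mul_nonneg hb0.le (by linarith : (0:ℝ) ≤ b*y + x - 1),
      mul_nonneg (by linarith : (0:ℝ) ≤ b*b - 1) (by linarith : (0:ℝ) ≤ e - y), hbbe]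
  have R1 : ⌊y + -e + 1⌋ = (0:ℤ) := by apply flr <;> push_cast <;> linarith
  have T1 : ⌊x + -e + 1⌋ = (0:ℤ) := by apply flr <;> push_cast <;> linarith
  have Hs : (b*x + y < e ∧ ⌊b*x + y + -e + 1⌋ = (0:ℤ) ∧ ⌊e*y + x + -e + 1⌋ = (0:ℤ) ∧
        ⌊b*(x + 1 - e) + y + -e + 1⌋ = n ∧ ⌊e*(y + 1 - e) + x + -e + 1⌋ = (0:ℤ)) ∨
      (b*x + y < 1 ∧ ⌊b*x + y + -e + 1⌋ = (1:ℤ) ∧ ⌊e*y + x + -e + 1⌋ = (0:ℤ) ∧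
        ⌊b*(x + 1 - e) + y + -e + 1⌋ = n ∧ ⌊e*(y + 1 - e) + x + -e + 1⌋ = (1:ℤ)) ∨
      (1 ≤ b*x + y ∧ ⌊b*x + y + -e + 1⌋ = (1:ℤ) ∧ ⌊e*y + x + -e + 1⌋ = (1:ℤ) ∧
        ⌊b*(x + 1 - e) + y + -e + 1⌋ = n + 1 ∧ ⌊e*(y + 1 - e) + x + -e + 1⌋ = (1:ℤ)) := by
    rcases lt_or_ge (b*x + y) e with h | h
    · have k1 : x + e*y < e*e := by nlinarith [mul_lt_mul_of_pos_left h he0, es]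
      exact Or.inl ⟨h, by apply flr <;> push_cast <;> linarith,
        by apply flr <;> push_cast <;> linarith,
        by apply flr <;> push_cast <;> nlinarith,
        by apply flr <;> push_cast <;> nlinarith⟩
    · rcases lt_or_ge (b*x + y) 1 with h' | h'
      · have k1 : e*e ≤ x + e*y := by nlinarith [mul_le_mul_of_nonneg_left h he0.le, es]
        have k2 : x + e*y < e := by nlinarith [mul_lt_mul_of_pos_left h' he0, es]
        exact Or.inr (Or.inl ⟨h', by apply flr <;> push_cast <;> linarith,
          by apply flr <;> push_cast <;> linarith,
          by apply flr <;> push_cast <;> nlinarith,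
          by apply flr <;> push_cast <;> nlinarith⟩)
      · have k1 : e ≤ x + e*y := by nlinarith [mul_le_mul_of_nonneg_left h' he0.le, es]
        exact Or.inr (Or.inr ⟨h', by apply flr <;> push_cast <;> linarith,
          by apply flr <;> push_cast <;> linarith,
          by apply flr <;> push_cast <;> nlinarith,
          by apply flr <;> push_cast <;> nlinarith⟩)
  have Ht : (b*y + x < e ∧ ⌊b*y + x + -e + 1⌋ = (0:ℤ) ∧ ⌊e*x + y + -e + 1⌋ = (0:ℤ) ∧
        ⌊b*(y + 1 - e) + x + -e + 1⌋ = n ∧ ⌊e*(x + 1 - e) + y + -e + 1⌋ = (0:ℤ)) ∨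
      (b*y + x < 1 ∧ ⌊b*y + x + -e + 1⌋ = (1:ℤ) ∧ ⌊e*x + y + -e + 1⌋ = (0:ℤ) ∧
        ⌊b*(y + 1 - e) + x + -e + 1⌋ = n ∧ ⌊e*(x + 1 - e) + y + -e + 1⌋ = (1:ℤ)) ∨
      (1 ≤ b*y + x ∧ ⌊b*y + x + -e + 1⌋ = (1:ℤ) ∧ ⌊e*x + y + -e + 1⌋ = (1:ℤ) ∧
        ⌊b*(y + 1 - e) + x + -e + 1⌋ = n + 1 ∧ ⌊e*(x + 1 - e) + y + -e + 1⌋ = (1:ℤ)) := by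
    rcases lt_or_ge (b*y + x) e with h | h
    · have k1 : y + e*x < e*e := by nlinarith [mul_lt_mul_of_pos_left h he0, et]
      exact Or.inl ⟨h, by apply flr <;> push_cast <;> linarith,
        by apply flr <;> push_cast <;> linarith,
        by apply flr <;> push_cast <;> nlinarith,
        by apply flr <;> push_cast <;> nlinarith⟩
    · rcases lt_or_ge (b*y + x) 1 with h' | h'
      · have k1 : e*e ≤ y + e*x := by nlinarith [mul_le_mul_of_nonneg_left h he0.le, et]
        have k2 : y + e*x < e := by nlinarith [mul_lt_mul_of_pos_left h' he0, et]
        exact Or.inr (Or.inl ⟨h', by apply flr <;> push_cast <;> linarith,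
          by apply flr <;> push_cast <;> linarith,
          by apply flr <;> push_cast <;> nlinarith,
          by apply flr <;> push_cast <;> nlinarith⟩)
      · have k1 : e ≤ y + e*x := by nlinarith [mul_le_mul_of_nonneg_left h' he0.le, et]
        exact Or.inr (Or.inr ⟨h', by apply flr <;> push_cast <;> linarith,
          by apply flr <;> push_cast <;> linarith,
          by apply flr <;> push_cast <;> nlinarith,
          by apply flr <;> push_cast <;> nlinarith⟩)
  rcases Hs with ⟨hcs, R3, T2, L3, B2⟩ | ⟨hcs, R3, T2, L3, B2⟩ | ⟨hcs, R3, T2, L3, B2⟩ <;>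
    rcases Ht with ⟨hct, T3, R2, B3, L2⟩ | ⟨hct, T3, R2, B3, L2⟩ | ⟨hct, T3, R2, B3, L2⟩
  · refine ⟨(0,0,n), (0,0,n), by simp [junctionVecs], by simp [junctionVecs],
      by simp, by simp, ?_⟩
    unfold TileAt Lam
    rw [f1, f2, f3, f4, hsb, R1, T1, R2, R3, T2, T3, L2, L3, B2, B3]
    simp only [Prod.mk.injEq, and_true, true_and]
    omega
  · refine ⟨(0,1,n), (0,0,n), by simp [junctionVecs], by simp [junctionVecs],
      by simp, by simp, ?_⟩
    unfold TileAt Lam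
    rw [f1, f2, f3, f4, hsb, R1, T1, R2, R3, T2, T3, L2, L3, B2, B3]
    simp only [Prod.mk.injEq, and_true, true_and]
    omega
  · exact absurd (imp2 hct) (not_le.mpr hcs)
  · refine ⟨(0,0,n), (0,1,n), by simp [junctionVecs], by simp [junctionVecs],
      by simp, by simp, ?_⟩
    unfold TileAt Lam
    rw [f1, f2, f3, f4, hsb, R1, T1, R2, R3, T2, T3, L2, L3, B2, B3]
    simp only [Prod.mk.injEq, and_true, true_and]
    omega
  · refine ⟨(0,1,n), (0,1,n), by simp [junctionVecs], by simp [junctionVecs],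
      by simp, by simp, ?_⟩
    unfold TileAt Lam
    rw [f1, f2, f3, f4, hsb, R1, T1, R2, R3, T2, T3, L2, L3, B2, B3]
    simp only [Prod.mk.injEq, and_true, true_and]
    omega
  · refine ⟨(0,1,n), (0,1,n+1), by simp [junctionVecs], by simp [junctionVecs],
      by simp, by simp, ?_⟩
    unfold TileAt Lam
    rw [f1, f2, f3, f4, hsb, R1, T1, R2, R3, T2, T3, L2, L3, B2, B3]
    simp only [Prod.mk.injEq, and_true, true_and]
    omega
  · exact absurd (imp1 hcs) (not_le.mpr hct)
  · refine ⟨(0,1,n+1), (0,1,n), by simp [junctionVecs], by simp [junctionVecs],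
      by simp, by simp, ?_⟩
    unfold TileAt Lam
    rw [f1, f2, f3, f4, hsb, R1, T1, R2, R3, T2, T3, L2, L3, B2, B3]
    simp only [Prod.mk.injEq, and_true, true_and]
    omega
  · refine ⟨(0,1,n+1), (0,1,n+1), by simp [junctionVecs], by simp [junctionVecs],
      by simp, by simp, ?_⟩
    unfold TileAt Lam
    rw [f1, f2, f3, f4, hsb, R1, T1, R2, R3, T2, T3, L2, L3, B2, B3]
    simp only [Prod.mk.injEq, and_true, true_and]
    omega

end MetallicMean
namespace MetallicMean

lemma tile_mem (n : ℤ) (hn : 1 ≤ n) (x y : ℝ) (hx0 : 0 ≤ x) (hx1 : x < 1)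
    (hy0 : 0 ≤ y) (hy1 : y < 1) : TileAt n x y ∈ TsetExplicit n := by
  rcases lt_or_ge x (beta n)⁻¹ with hx | hx <;> rcases lt_or_ge y (beta n)⁻¹ with hy | hy
  · exact Or.inr (caseD n hn x y hx0 hy0 hx hy)
  · -- x small, y big : vertical tiles
    have h := caseHoriz n hn y x hy1 hx0 hx hy
    have heq : TileAt n x y = reflect (TileAt n y x) := rfl
    rcases h with (h | h) | h
    · exact Or.inl (Or.inl (Or.inl (Or.inr ⟨_, h, heq.symm⟩)))
    · exact Or.inl (Or.inl (Or.inr ⟨_, h, heq.symm⟩))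
    · exact Or.inl (Or.inr ⟨_, h, heq.symm⟩)
  · -- y small, x big : horizontal tiles
    have h := caseHoriz n hn x y hx1 hy0 hy hx
    rcases h with (h | h) | h
    · exact Or.inl (Or.inl (Or.inl (Or.inl (Or.inl (Or.inl (Or.inr h))))))
    · exact Or.inl (Or.inl (Or.inl (Or.inl (Or.inl (Or.inr h)))))
    · exact Or.inl (Or.inl (Or.inl (Or.inl (Or.inr h))))
  · exact Or.inl (Or.inl (Or.inl (Or.inl (Or.inl (Or.inl (Or.inl
      (caseA n hn x y hx1 hy1 hx hy)))))))

lemma fract_add_const (x c : ℝ) :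
    Int.fract (Int.fract x + c) = Int.fract (x + c) := by
  conv_rhs => rw [show x + c = Int.fract x + c + ((⌊x⌋ : ℤ) : ℝ) by
    unfold Int.fract; push_cast; ring]
  rw [Int.fract_add_intCast]

lemma TileAt_fract (n : ℤ) (x y : ℝ) :
    TileAt n (Int.fract x) (Int.fract y) = TileAt n x y := by
  unfold TileAt
  rw [Int.fract_fract, Int.fract_fract, fract_add_const, fract_add_const]

end MetallicMean
namespace MetallicMean

/-- For every (x,y) ∈ [0,1]², the configuration
c_(x,y)(i,j) = TILE_n(x + iβ⁻¹, y + jβ⁻¹) is a valid tiling of the plane by 𝒯_n. -/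
theorem statement11 (n : ℤ) (hn : 1 ≤ n) (x y : ℝ)
    (hx : x ∈ Set.Icc (0 : ℝ) 1) (hy : y ∈ Set.Icc (0 : ℝ) 1) :
    ∀ i j : ℤ,
      TileAt n (x + (i : ℝ) * (beta n)⁻¹) (y + (j : ℝ) * (beta n)⁻¹) ∈ TsetExplicit n ∧
      right (TileAt n (x + (i : ℝ) * (beta n)⁻¹) (y + (j : ℝ) * (beta n)⁻¹)) =
        left (TileAt n (x + ((i : ℝ) + 1) * (beta n)⁻¹) (y + (j : ℝ) * (beta n)⁻¹)) ∧
      top (TileAt n (x + (i : ℝ) * (beta n)⁻¹) (y + (j : ℝ) * (beta n)⁻¹)) =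
        bottom (TileAt n (x + (i : ℝ) * (beta n)⁻¹) (y + ((j : ℝ) + 1) * (beta n)⁻¹)) := by

  obtain ⟨hb, hb1, hbe, hen, hsb⟩ := beta_facts n hn
  intro i j
  refine ⟨?_, ?_, ?_⟩
  · rw [← TileAt_fract]
    exact tile_mem n hn _ _ (Int.fract_nonneg _) (Int.fract_lt_one _)
      (Int.fract_nonneg _) (Int.fract_lt_one _)
  · have hXX : x + ((i : ℝ) + 1) * (beta n)⁻¹ + betaStar n = x + (i : ℝ) * (beta n)⁻¹ := by
      rw [hsb]; ring
    simp only [right, left, TileAt]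
    rw [hXX]
  · have hYY : y + ((j : ℝ) + 1) * (beta n)⁻¹ + betaStar n = y + (j : ℝ) * (beta n)⁻¹ := by
      rw [hsb]; ring
    simp only [top, bottom, TileAt]
    rw [hYY]

end MetallicMean
end

section
/- For every integer n ≥ 1, there is no (x,y) ∈ [0,1)² such that simultaneously Λ_n(x,y) = (0,0,0) and Λ_n(y,x) = (0,1,1). (This shows the junction tile with right label (0,0,0) and top label (0,1,1) does not occur as TILE_n(x,y).) -/
open scoped BigOperators

namespace MetallicMean

/-- There is no (x,y) ∈ [0,1)² with Λ_n(x,y) = (0,0,0) and Λ_n(y,x) = (0,1,1). -/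
theorem statement12 (n : ℤ) (hn : 1 ≤ n) :
    ¬ ∃ x y : ℝ, x ∈ Set.Ico (0 : ℝ) 1 ∧ y ∈ Set.Ico (0 : ℝ) 1 ∧
      Lam n x y = ((0, 0, 0) : Vec3) ∧ Lam n y x = ((0, 1, 1) : Vec3) := by
  rintro ⟨x, y, hx, hy, h1, h2⟩
  simp only [Lam, Prod.mk.injEq] at h1 h2
  obtain ⟨-, -, h13⟩ := h1
  obtain ⟨-, h22, -⟩ := h2
  set b := beta n with hb
  have hn1 : (1 : ℝ) ≤ (n : ℝ) := by exact_mod_cast hn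
  have hs : Real.sqrt ((n : ℝ) ^ 2 + 4) ^ 2 = (n : ℝ) ^ 2 + 4 :=
    Real.sq_sqrt (by positivity)
  have hsgt : (n : ℝ) < Real.sqrt ((n : ℝ) ^ 2 + 4) := by
    nlinarith [Real.sqrt_nonneg ((n : ℝ) ^ 2 + 4)]
  have hbgt : (1 : ℝ) < b := by
    rw [hb, beta]; nlinarith
  have hbpos : (0 : ℝ) < b := lt_trans one_pos hbgt
  have hb2 : b * b = (n : ℝ) * b + 1 := by
    rw [hb, beta]; field_simp; nlinarith
  have hinv : b⁻¹ = b - (n : ℝ) := by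
    field_simp
    nlinarith
  have hstar : betaStar n = -b⁻¹ := by
    rw [betaStar, hinv, ← hb]; ring
  have hA : b * x + y + betaStar n + 1 < 1 := by
    have := (Int.floor_eq_iff.mp h13).2
    push_cast at this
    linarith
  have hB : (1 : ℝ) ≤ b⁻¹ * y + x + betaStar n + 1 := by
    have := (Int.floor_eq_iff.mp h22).1
    push_cast at this
    linarith
  rw [hstar] at hA hB
  have hA' : b * x + y < b⁻¹ := by linarith
  have hB' : b⁻¹ ≤ b⁻¹ * y + x := by linarith
  have hB2 : (1 : ℝ) ≤ y + b * x := by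
    have := mul_le_mul_of_nonneg_left hB' (le_of_lt hbpos)
    rw [mul_inv_cancel₀ (ne_of_gt hbpos)] at this
    calc (1 : ℝ) ≤ b * (b⁻¹ * y + x) := this
      _ = (b * b⁻¹) * y + b * x := by ring
      _ = y + b * x := by rw [mul_inv_cancel₀ (ne_of_gt hbpos)]; ring
  have hbinv : b⁻¹ < 1 := by
    rw [inv_lt_one_iff₀]; right; exact hbgt
  linarith

end MetallicMean
end
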